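/- Under the stated assumptions, for every integer k ≥ 1, all 0 < a < b and every x > 0, lim_{n→∞} m_n ∫_{a/n}^{b/n} C(n,k) q^k (1−q)^{n−k} · F̄(a_n q^{1/α'} x) · q^{−ρ} L(1/q) dq = x^{−α} · (β/Γ(1−β)) ∫_a^b e^{−u} u^{k−1−β}/k! du. (This is the key computation behind the conditional limit: given the exceedance event, (τ_n, nq) converges jointly to (Q_β, G(Q_β − β)).) -/

import Mathlib

open Filter Set MeasureTheory

private lemma logdiff (L : ℝ → ℝ) (hLpos : ∀ x : ℝ, 0 < x → 0 < L x)
    (hLslow : ∀ c : ℝ, 0 < c → Tendsto (fun x : ℝ => L (c * x) / L x) atTop (nhds 1))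
    (τ : ℕ → ℝ) (hτ : Tendsto τ atTop atTop) (v : ℝ) :
    Tendsto (fun j => Real.log (L (Real.exp (τ j + v))) - Real.log (L (Real.exp (τ j))))
      atTop (nhds 0) := by
  have h1 : Tendsto (fun j => L (Real.exp v * Real.exp (τ j)) / L (Real.exp (τ j)))
      atTop (nhds 1) :=
    (hLslow (Real.exp v) (Real.exp_pos v)).comp (Real.tendsto_exp_atTop.comp hτ)
  have h2 : Tendsto (fun j => Real.log (L (Real.exp v * Real.exp (τ j)) / L (Real.exp (τ j))))
      atTop (nhds 0) := by
    have := ((Real.continuousAt_log one_ne_zero).tendsto).comp h1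
    simpa [Function.comp_def] using this
  refine h2.congr fun j => ?_
  rw [Real.log_div (hLpos _ (by positivity)).ne' (hLpos _ (Real.exp_pos _)).ne']
  rw [Real.exp_add, mul_comm]

/-- Uniform convergence theorem for slowly varying functions. -/
private lemma uct (L : ℝ → ℝ) (hLmeas : Measurable L) (hLpos : ∀ x : ℝ, 0 < x → 0 < L x)
    (hLslow : ∀ c : ℝ, 0 < c → Tendsto (fun x : ℝ => L (c * x) / L x) atTop (nhds 1))
    {A B : ℝ} (hA : 0 < A) (hAB : A ≤ B) {ε : ℝ} (hε : 0 < ε) :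
    ∀ᶠ y : ℝ in atTop, ∀ c ∈ Set.Icc A B, |L (c * y) / L y - 1| ≤ ε := by
  by_contra hcon
  rw [Filter.not_eventually] at hcon
  have hseq : ∀ j : ℕ, ∃ y : ℝ, ((j : ℝ) + 1 ≤ y ∧ ∃ c, c ∈ Set.Icc A B ∧
      ε < |L (c * y) / L y - 1|) := by
    intro j
    rcases frequently_atTop.mp hcon ((j : ℝ) + 1) with ⟨y, hy, hny⟩
    push_neg at hny
    obtain ⟨c, hc, hcy⟩ := hny
    exact ⟨y, hy, c, hc, hcy⟩
  choose y hy c hc hεc using hseq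
  have hyj : ∀ j, (0:ℝ) < y j := fun j => lt_of_lt_of_le (by positivity) (hy j)
  have hcj : ∀ j, 0 < c j := fun j => lt_of_lt_of_le hA (hc j).1
  set h : ℝ → ℝ := fun t => Real.log (L (Real.exp t)) with hh
  have hmeas_h : Measurable h := Real.measurable_log.comp (hLmeas.comp Real.measurable_exp)
  set t : ℕ → ℝ := fun j => Real.log (y j) with ht
  set s : ℕ → ℝ := fun j => Real.log (c j) with hs
  have hts : Tendsto t atTop atTop := by
    refine Real.tendsto_log_atTop.comp (tendsto_atTop_mono hy ?_)
    exact tendsto_atTop_add_const_right _ 1 tendsto_natCast_atTop_atTop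
  set sa := Real.log A with hsa
  set sb := Real.log B with hsb
  have hsj : ∀ j, s j ∈ Set.Icc sa sb := fun j =>
    ⟨Real.log_le_log hA (hc j).1, Real.log_le_log (hcj j) (hc j).2⟩
  set M := max |sa| |sb| with hM
  have hM0 : 0 ≤ M := le_trans (abs_nonneg sa) (le_max_left _ _)
  have hsM : ∀ j, |s j| ≤ M := by
    intro j
    rw [abs_le]
    constructor
    · calc -M ≤ -|sa| := by simp [hM]
        _ ≤ sa := neg_abs_le sa
        _ ≤ s j := (hsj j).1
    · calc s j ≤ sb := (hsj j).2
        _ ≤ |sb| := le_abs_self sb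
        _ ≤ M := le_max_right _ _
  have htss : Tendsto (fun j => t j + s j) atTop atTop := by
    refine tendsto_atTop_mono (fun j => ?_) (tendsto_atTop_add_const_right _ (-M) hts)
    have := (abs_le.mp (hsM j)).1
    linarith
  set φ : ℕ → ℝ → ℝ := fun j v =>
    |h (t j + v) - h (t j)| + |h (t j + s j + v) - h (t j + s j)| with hφ
  have hφmeas : ∀ j, StronglyMeasurable (φ j) := by
    intro j
    refine Measurable.stronglyMeasurable ?_
    exact (((hmeas_h.comp (measurable_id.const_add (t j))).sub measurable_const).abs).add
      (((hmeas_h.comp (measurable_id.const_add (t j + s j))).sub measurable_const).abs)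
  have hφpt : ∀ v : ℝ, Tendsto (fun j => φ j v) atTop (nhds 0) := by
    intro v
    have h1 := (logdiff L hLpos hLslow t hts v).abs
    have h2 := (logdiff L hLpos hLslow (fun j => t j + s j) htss v).abs
    simpa using h1.add h2
  set I : Set ℝ := Set.Icc (-(M+1)) (M+1) with hI
  have hμI : volume I ≠ ⊤ := (measure_Icc_lt_top).ne
  obtain ⟨tset, htsub, htmeas, htμ, hunif⟩ :=
    MeasureTheory.tendstoUniformlyOn_of_ae_tendsto (μ := volume) (f := φ) (g := fun _ => 0)
      hφmeas stronglyMeasurable_const measurableSet_Icc hμI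
      (ae_of_all _ fun v _ => hφpt v) (by norm_num : (0:ℝ) < 1/4)
  set S := I \ tset with hS
  have hSmeas : MeasurableSet S := measurableSet_Icc.diff htmeas
  rw [Metric.tendstoUniformlyOn_iff] at hunif
  have hε₀ : 0 < Real.log (1 + ε) / 2 := by
    have := Real.log_pos (by linarith : (1:ℝ) < 1 + ε)
    linarith
  obtain ⟨J, hJ⟩ := (eventually_atTop.mp (hunif _ hε₀))
  -- measure argument: find w ∈ S with w - s J ∈ S
  set T' : Set ℝ := (fun v => v - s J) ⁻¹' S with hT'
  have hT'meas : MeasurableSet T' := hSmeas.preimage (measurable_id.sub_const _)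
  have hμT' : volume T' = volume S := by
    rw [hT']
    have : (fun v : ℝ => v - s J) ⁻¹' S = (fun v : ℝ => v + (- s J)) ⁻¹' S := by
      ext v; simp [sub_eq_add_neg]
    rw [this, measure_preimage_add_right]
  have hIS : volume I ≤ volume S + ENNReal.ofReal (1/4) := by
    have hsub : I ⊆ S ∪ tset := fun v hv => by
      by_cases hvt : v ∈ tset
      · exact Or.inr hvt
      · exact Or.inl ⟨hv, hvt⟩
    calc volume I ≤ volume (S ∪ tset) := measure_mono hsub
      _ ≤ volume S + volume tset := measure_union_le _ _
      _ ≤ volume S + ENNReal.ofReal (1/4) := by exact add_le_add_right htμ _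
  have hT'diff : volume (T' \ I) ≤ ENNReal.ofReal M + ENNReal.ofReal M := by
    have hsub : T' \ I ⊆ Set.Icc (M+1) (2*M+1) ∪ Set.Icc (-(2*M+1)) (-(M+1)) := by
      rintro v ⟨hvT, hvI⟩
      have hv1 : v - s J ∈ I := (show v - s J ∈ S from hvT).1
      rw [hI, Set.mem_Icc] at hv1
      rw [hI, Set.mem_Icc] at hvI
      push_neg at hvI
      have hsv := abs_le.mp (hsM J)
      by_cases hcase : -(M+1) ≤ v
      · left
        constructor
        · linarith [hvI hcase]
        · linarith [hv1.2]
      · right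
        push_neg at hcase
        constructor
        · linarith [hv1.1]
        · linarith
    calc volume (T' \ I) ≤ volume (Set.Icc (M+1) (2*M+1) ∪ Set.Icc (-(2*M+1)) (-(M+1))) :=
          measure_mono hsub
      _ ≤ volume (Set.Icc (M+1) (2*M+1)) + volume (Set.Icc (-(2*M+1)) (-(M+1))) :=
          measure_union_le _ _
      _ ≤ ENNReal.ofReal M + ENNReal.ofReal M := by
          rw [Real.volume_Icc, Real.volume_Icc]
          exact add_le_add (by apply ENNReal.ofReal_le_ofReal; linarith)
            (by apply ENNReal.ofReal_le_ofReal; linarith)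
  have hkey : volume (S ∩ T') ≠ 0 := by
    intro hzero
    have hST'sub : S ∪ (T' ∩ I) ⊆ I := by
      rintro v (hv | hv)
      · exact hv.1
      · exact hv.2
    have hSfin : volume S ≠ ⊤ := fun hcon' => hμI (top_le_iff.mp (hcon' ▸ measure_mono diff_subset))
    have e1 : volume (S ∪ (T' ∩ I)) + volume (S ∩ (T' ∩ I)) = volume S + volume (T' ∩ I) :=
      measure_union_add_inter S (hT'meas.inter measurableSet_Icc)
    have e2 : S ∩ (T' ∩ I) = S ∩ T' := by
      ext v; constructor
      · rintro ⟨h1, h2, _⟩; exact ⟨h1, h2⟩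
      · rintro ⟨h1, h2⟩; exact ⟨h1, h2, h1.1⟩
    have e3 : volume T' ≤ volume (T' ∩ I) + (ENNReal.ofReal M + ENNReal.ofReal M) := by
      calc volume T' ≤ volume ((T' ∩ I) ∪ (T' \ I)) := measure_mono (by
            intro v hv
            by_cases hvI : v ∈ I
            · exact Or.inl ⟨hv, hvI⟩
            · exact Or.inr ⟨hv, hvI⟩)
        _ ≤ volume (T' ∩ I) + volume (T' \ I) := measure_union_le _ _
        _ ≤ _ := add_le_add_right hT'diff _
    -- combine
    have hbig : volume I + volume I ≤ volume I + (ENNReal.ofReal (1/4) + ENNReal.ofReal (1/4)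
        + ENNReal.ofReal M + ENNReal.ofReal M) := by
      calc volume I + volume I
          ≤ (volume S + ENNReal.ofReal (1/4)) + (volume S + ENNReal.ofReal (1/4)) :=
            add_le_add hIS hIS
        _ = volume S + volume S + (ENNReal.ofReal (1/4) + ENNReal.ofReal (1/4)) := by ring
        _ = volume S + volume T' + (ENNReal.ofReal (1/4) + ENNReal.ofReal (1/4)) := by
            rw [hμT']
        _ ≤ volume S + (volume (T' ∩ I) + (ENNReal.ofReal M + ENNReal.ofReal M))
              + (ENNReal.ofReal (1/4) + ENNReal.ofReal (1/4)) := by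
            exact add_le_add_left (add_le_add_right e3 _) _
        _ = (volume S + volume (T' ∩ I)) + (ENNReal.ofReal M + ENNReal.ofReal M)
              + (ENNReal.ofReal (1/4) + ENNReal.ofReal (1/4)) := by ring
        _ = (volume (S ∪ (T' ∩ I)) + volume (S ∩ T')) + (ENNReal.ofReal M + ENNReal.ofReal M)
              + (ENNReal.ofReal (1/4) + ENNReal.ofReal (1/4)) := by rw [← e1, e2]
        _ = volume (S ∪ (T' ∩ I)) + (ENNReal.ofReal M + ENNReal.ofReal M)
              + (ENNReal.ofReal (1/4) + ENNReal.ofReal (1/4)) := by rw [hzero, add_zero]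
        _ ≤ volume I + (ENNReal.ofReal (1/4) + ENNReal.ofReal (1/4)
              + ENNReal.ofReal M + ENNReal.ofReal M) := by
            have hmm : volume (S ∪ T' ∩ I) ≤ volume I := measure_mono hST'sub
            calc _ ≤ volume I + (ENNReal.ofReal M + ENNReal.ofReal M)
                  + (ENNReal.ofReal (1/4) + ENNReal.ofReal (1/4)) :=
                  add_le_add_left (add_le_add_left hmm _) _
              _ = volume I + (ENNReal.ofReal (1/4) + ENNReal.ofReal (1/4)
                  + ENNReal.ofReal M + ENNReal.ofReal M) := by ring
    have hIle := (ENNReal.add_le_add_iff_left hμI).mp hbig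
    rw [hI, Real.volume_Icc] at hIle
    have : ENNReal.ofReal (M + 1 - -(M+1)) ≤ ENNReal.ofReal (1/4 + 1/4 + M + M) := by
      calc ENNReal.ofReal (M + 1 - -(M+1)) ≤ ENNReal.ofReal (1/4) + ENNReal.ofReal (1/4)
            + ENNReal.ofReal M + ENNReal.ofReal M := hIle
        _ = ENNReal.ofReal (1/4 + 1/4 + M + M) := by
            rw [ENNReal.ofReal_add (by linarith : (0:ℝ) ≤ 1/4 + 1/4 + M) hM0,
              ENNReal.ofReal_add (by linarith : (0:ℝ) ≤ 1/4 + 1/4) hM0,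
              ENNReal.ofReal_add (by norm_num : (0:ℝ) ≤ 1/4) (by norm_num : (0:ℝ) ≤ 1/4)]
    rw [ENNReal.ofReal_le_ofReal_iff (by linarith)] at this
    linarith
  obtain ⟨w, hwS, hwT'⟩ := MeasureTheory.nonempty_of_measure_ne_zero hkey
  have hwsS : w - s J ∈ S := hwT'
  -- uniform smallness at w and w - s J
  have h1 := hJ J le_rfl w hwS
  have h2 := hJ J le_rfl (w - s J) hwsS
  have hφnn : ∀ v, 0 ≤ φ J v := fun v => add_nonneg (abs_nonneg _) (abs_nonneg _)
  rw [dist_eq_norm] at h1 h2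
  simp only [zero_sub, norm_neg, Real.norm_eq_abs] at h1 h2
  rw [abs_of_nonneg (hφnn w)] at h1
  rw [abs_of_nonneg (hφnn (w - s J))] at h2
  -- key triangle inequality
  have htri : |h (t J + s J) - h (t J)| < Real.log (1 + ε) := by
    have e : h (t J + s J) - h (t J) =
        (h (t J + w) - h (t J)) - (h (t J + s J + (w - s J)) - h (t J + s J)) := by
      have : t J + s J + (w - s J) = t J + w := by ring
      rw [this]; ring
    rw [e]
    have b1 : |h (t J + w) - h (t J)| ≤ φ J w := le_add_of_nonneg_right (abs_nonneg _)
    have b2 : |h (t J + s J + (w - s J)) - h (t J + s J)| ≤ φ J (w - s J) :=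
      le_add_of_nonneg_left (abs_nonneg _)
    calc |(h (t J + w) - h (t J)) - (h (t J + s J + (w - s J)) - h (t J + s J))|
        ≤ |h (t J + w) - h (t J)| + |h (t J + s J + (w - s J)) - h (t J + s J)| := abs_sub _ _
      _ ≤ φ J w + φ J (w - s J) := add_le_add b1 b2
      _ < Real.log (1 + ε) / 2 + Real.log (1 + ε) / 2 := add_lt_add h1 h2
      _ = Real.log (1 + ε) := by ring
  -- lower bound
  set R := L (c J * y J) / L (y J) with hR
  have hR0 : 0 < R := div_pos (hLpos _ (mul_pos (hcj J) (hyj J))) (hLpos _ (hyj J))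
  have hlog : h (t J + s J) - h (t J) = Real.log R := by
    have e1 : Real.exp (t J) = y J := Real.exp_log (hyj J)
    have e2 : Real.exp (t J + s J) = c J * y J := by
      rw [Real.exp_add, e1, Real.exp_log (hcj J), mul_comm]
    rw [hh]
    simp only []
    rw [e1, e2, hR, Real.log_div (hLpos _ (mul_pos (hcj J) (hyj J))).ne' (hLpos _ (hyj J)).ne']
  have hRε : ε < |R - 1| := hεc J
  have hlb : Real.log (1 + ε) ≤ |Real.log R| := by
    rcases lt_abs.mp hRε with hgt | hlt
    · have : 1 + ε < R := by linarith
      calc Real.log (1 + ε) ≤ Real.log R := Real.log_le_log (by linarith) this.le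
        _ ≤ |Real.log R| := le_abs_self _
    · have hRlt : R < 1 - ε := by linarith
      have hε1 : ε < 1 := by nlinarith
      have h1e : (0:ℝ) < 1 - ε := by linarith
      have step1 : (1 + ε) ≤ 1 / (1 - ε) := by
        rw [le_div_iff₀ h1e]; nlinarith
      have step2 : 1 / (1 - ε) ≤ 1 / R := by
        apply one_div_le_one_div_of_le hR0 hRlt.le
      calc Real.log (1 + ε) ≤ Real.log (1 / R) :=
            Real.log_le_log (by linarith) (le_trans step1 step2)
        _ = -Real.log R := by rw [one_div, Real.log_inv]
        _ ≤ |Real.log R| := neg_le_abs _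
  rw [hlog] at htri
  exact absurd (lt_of_le_of_lt hlb htri) (lt_irrefl _)

private lemma choose_lim (k : ℕ) :
    Tendsto (fun n : ℕ => (n.choose k : ℝ) / (n : ℝ) ^ k) atTop
      (nhds (1 / (Nat.factorial k : ℝ))) := by
  have hprod : Tendsto (fun n : ℕ => ∏ i ∈ Finset.range k, (((n : ℝ) - i) / n)) atTop
      (nhds (∏ _i ∈ Finset.range k, (1:ℝ))) := by
    refine tendsto_finset_prod _ fun i _ => ?_
    have h0 : Tendsto (fun n : ℕ => (i : ℝ) / n) atTop (nhds 0) :=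
      tendsto_const_div_atTop_nhds_zero_nat _
    have h1 : Tendsto (fun n : ℕ => 1 - (i : ℝ) / n) atTop (nhds (1 - 0)) :=
      tendsto_const_nhds.sub h0
    rw [sub_zero] at h1
    refine h1.congr' ?_
    filter_upwards [eventually_ge_atTop 1] with n hn
    have hn0 : (n : ℝ) ≠ 0 := by positivity
    field_simp
  have hev : ∀ᶠ n : ℕ in atTop, (1 / (Nat.factorial k : ℝ)) *
      ∏ i ∈ Finset.range k, (((n : ℝ) - i) / n) = (n.choose k : ℝ) / (n : ℝ) ^ k := by
    filter_upwards [eventually_ge_atTop k, eventually_ge_atTop 1] with n hnk hn1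
    have hn0 : (0:ℝ) < (n:ℝ) := by positivity
    have hcast : ((n.descFactorial k : ℕ) : ℝ) = ∏ i ∈ Finset.range k, ((n : ℝ) - i) := by
      rw [Nat.descFactorial_eq_prod_range]
      push_cast
      refine Finset.prod_congr rfl fun i hi => ?_
      have : i ≤ n := le_trans (Finset.mem_range.mp hi).le hnk
      rw [Nat.cast_sub this]
    have hchoose : (n.choose k : ℝ) = (n.descFactorial k : ℝ) / (Nat.factorial k : ℝ) := by
      rw [Nat.choose_eq_descFactorial_div_factorial]
      rw [Nat.cast_div (Nat.factorial_dvd_descFactorial n k)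
        (by exact_mod_cast (Nat.factorial_pos k).ne')]
    have hpk : (∏ _i ∈ Finset.range k, (n:ℝ)) = (n:ℝ)^k := by
      rw [Finset.prod_const, Finset.card_range]
    rw [hchoose, hcast]
    rw [Finset.prod_div_distrib, hpk]
    ring
  have := (tendsto_const_nhds.mul hprod).congr' hev
  simpa using this

private lemma pow_exp_lim (u : ℝ) (hu : 0 < u) (k : ℕ) :
    Tendsto (fun n : ℕ => (1 - u / (n : ℝ)) ^ (n - k)) atTop (nhds (Real.exp (-u))) := by
  have hbase := Real.tendsto_one_add_div_pow_exp (-u)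
  have h1 : Tendsto (fun n : ℕ => 1 + (-u) / (n : ℝ)) atTop (nhds 1) := by
    have h0 := tendsto_const_div_atTop_nhds_zero_nat (-u)
    have := (tendsto_const_nhds (x := (1:ℝ))).add h0
    simpa using this
  have hden : Tendsto (fun n : ℕ => (1 + (-u) / (n : ℝ)) ^ k) atTop (nhds 1) := by
    have := h1.pow k
    simpa using this
  have hdiv := hbase.div hden one_ne_zero
  rw [div_one] at hdiv
  refine hdiv.congr' ?_
  filter_upwards [eventually_gt_atTop ⌈u⌉₊, eventually_ge_atTop k] with n hn hkn
  have hun : u < (n : ℝ) := lt_of_le_of_lt (Nat.le_ceil u) (by exact_mod_cast hn)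
  have hn0 : (0:ℝ) < n := lt_trans hu hun
  have hpos : (0:ℝ) < 1 - u / n := by
    rw [sub_pos]
    exact (div_lt_one hn0).mpr hun
  have he : 1 + (-u) / (n:ℝ) = 1 - u / n := by ring
  show (1 + -u / (n:ℝ)) ^ n / (1 + -u / (n:ℝ)) ^ k = (1 - u / (n:ℝ)) ^ (n - k)
  rw [he, pow_sub₀ _ hpos.ne' hkn, div_eq_mul_inv]

private lemma talg (L : ℝ → ℝ) {α C_X α' ρ β x u mn an : ℝ} {n : ℕ}
    (hα : 0 < α) (hα' : 0 < α') (hC : 0 < C_X) (hβ0 : 0 < β)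
    (hΓ : 0 < Real.Gamma (1 - β)) (hβdef : β = α / α' + ρ - 1)
    (hx : 0 < x) (hu : 0 < u) (hn : 0 < (n : ℝ)) (hLn : 0 < L n) (hmn : 0 < mn)
    (han : an = (C_X * (Real.Gamma (1 - β) / β) * (n : ℝ) ^ β * mn * L n) ^ (1 / α)) :
    (an * (u/(n:ℝ)) ^ (1/α') * x) ^ α
      = (C_X * (Real.Gamma (1 - β) / β) * u ^ (α/α') * x ^ α)
        * (mn * L n / (n:ℝ) ^ (1-ρ)) := by
  have hq : 0 < u / (n:ℝ) := div_pos hu hn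
  have hP : 0 < C_X * (Real.Gamma (1 - β) / β) * (n : ℝ) ^ β * mn * L n := by positivity
  have han0 : 0 < an := by rw [han]; positivity
  have e_an : an ^ α = C_X * (Real.Gamma (1 - β) / β) * (n : ℝ) ^ β * mn * L n := by
    rw [han, one_div, Real.rpow_inv_rpow hP.le hα.ne']
  have e_q : ((u/(n:ℝ)) ^ (1/α')) ^ α = u^(α/α') * (((n:ℝ))^(α/α'))⁻¹ := by
    rw [← Real.rpow_mul hq.le, one_div_mul_eq_div, Real.div_rpow hu.le hn.le, div_eq_mul_inv]
  have e_t : (an * (u/(n:ℝ))^(1/α') * x) ^ α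
      = (C_X * (Real.Gamma (1 - β) / β) * (n : ℝ) ^ β * mn * L n)
        * (u^(α/α') * (((n:ℝ))^(α/α'))⁻¹) * x^α := by
    rw [Real.mul_rpow (mul_nonneg han0.le (Real.rpow_nonneg hq.le _)) hx.le,
      Real.mul_rpow han0.le (Real.rpow_nonneg hq.le _), e_an, e_q]
  have ep : (n:ℝ)^β * (((n:ℝ))^(α/α'))⁻¹ = (((n:ℝ))^(1-ρ))⁻¹ := by
    rw [← Real.rpow_neg hn.le, ← Real.rpow_add hn, ← Real.rpow_neg hn.le]
    congr 1
    rw [hβdef]; ring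
  rw [e_t, show mn * L (n:ℝ) / (n:ℝ)^(1-ρ) = mn * L (n:ℝ) * (((n:ℝ))^(1-ρ))⁻¹ from
    div_eq_mul_inv _ _, ← ep]
  ring

private lemma alg (L Fbar : ℝ → ℝ) {α C_X α' ρ β x u mn an : ℝ} {n k : ℕ}
    (hα : 0 < α) (hα' : 0 < α') (hC : 0 < C_X) (hβ0 : 0 < β)
    (hΓ : 0 < Real.Gamma (1 - β)) (hβdef : β = α / α' + ρ - 1)
    (hx : 0 < x) (hu : 0 < u) (hn : 0 < (n : ℝ)) (hLn : 0 < L n) (hmn : 0 < mn)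
    (han : an = (C_X * (Real.Gamma (1 - β) / β) * (n : ℝ) ^ β * mn * L n) ^ (1 / α)) :
    (mn / (n:ℝ)) * ((n.choose k : ℝ) * (u/(n:ℝ)) ^ k * (1 - u/(n:ℝ)) ^ (n - k) *
        Fbar (an * (u/(n:ℝ)) ^ (1/α') * x) * (u/(n:ℝ)) ^ (-ρ) * L (1 / (u/(n:ℝ))))
      = ((n.choose k : ℝ)/(n:ℝ)^k) * u^k * (1 - u/(n:ℝ))^(n-k) *
        (Fbar (an * (u/(n:ℝ)) ^ (1/α') * x) * (an * (u/(n:ℝ)) ^ (1/α') * x) ^ α) *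
        (x ^ (-α) * u ^ (-(1+β)) * (β/(C_X * Real.Gamma (1-β)))) *
        (L ((1/u) * (n:ℝ)) / L (n:ℝ)) := by
  have hq : 0 < u / (n:ℝ) := div_pos hu hn
  have hP : 0 < C_X * (Real.Gamma (1 - β) / β) * (n : ℝ) ^ β * mn * L n := by positivity
  have han0 : 0 < an := by rw [han]; positivity
  have e_an : an ^ α = C_X * (Real.Gamma (1 - β) / β) * (n : ℝ) ^ β * mn * L n := by
    rw [han, one_div, Real.rpow_inv_rpow hP.le hα.ne']
  have e_q : ((u/(n:ℝ)) ^ (1/α')) ^ α = u^(α/α') * (((n:ℝ))^(α/α'))⁻¹ := by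
    rw [← Real.rpow_mul hq.le, one_div_mul_eq_div, Real.div_rpow hu.le hn.le, div_eq_mul_inv]
  have e_t : (an * (u/(n:ℝ))^(1/α') * x) ^ α
      = (C_X * (Real.Gamma (1 - β) / β) * (n : ℝ) ^ β * mn * L n)
        * (u^(α/α') * (((n:ℝ))^(α/α'))⁻¹) * x^α := by
    rw [Real.mul_rpow (mul_nonneg han0.le (Real.rpow_nonneg hq.le _)) hx.le,
      Real.mul_rpow han0.le (Real.rpow_nonneg hq.le _), e_an, e_q]
  have e_L : 1 / (u/(n:ℝ)) = (1/u) * (n:ℝ) := by field_simp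
  have e_ρ : (u/(n:ℝ)) ^ (-ρ) = u^(-ρ) * ((n:ℝ))^ρ := by
    rw [Real.div_rpow hu.le hn.le, Real.rpow_neg hn.le]; field_simp
  have e_uρ : u ^ (-ρ) = u ^ (α/α') * u ^ (-(1+β)) := by
    rw [← Real.rpow_add hu]; congr 1; rw [hβdef]; ring
  have e_pβ : ((n:ℝ)) ^ β = ((n:ℝ)) ^ ρ / (n:ℝ) * ((n:ℝ)) ^ (α/α') := by
    rw [hβdef, show α/α' + ρ - 1 = (ρ + α/α') - 1 by ring, Real.rpow_sub hn,
      Real.rpow_add hn, Real.rpow_one]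
    ring
  have e_x : x ^ (-α) = (x ^ α)⁻¹ := Real.rpow_neg hx.le α
  have e_pk : (u/(n:ℝ)) ^ k = u ^ k / ((n:ℝ)) ^ k := div_pow u _ k
  have hxα : (0:ℝ) < x ^ α := Real.rpow_pos_of_pos hx α
  have hnk : ((n:ℝ)) ^ k ≠ 0 := by positivity
  have hpr : (0:ℝ) < ((n:ℝ)) ^ (α/α') := Real.rpow_pos_of_pos hn _
  rw [e_t, e_L, e_ρ, e_uρ, e_pβ, e_x, e_pk]
  field_simp

/-- Key computation behind the conditional limit theorem: given the exceedance event,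
`(τ_n, nq)` converges jointly to `(Q_β, G(Q_β − β))`; for every `k ≥ 1`, `0 < a < b`,
`x > 0`,
`m_n ∫_{a/n}^{b/n} C(n,k) q^k (1−q)^{n−k} F̄(a_n q^{1/α′} x) q^{−ρ} L(1/q) dq
  → x^{−α} (β/Γ(1−β)) ∫_a^b e^{−u} u^{k−1−β}/k! du`. -/
theorem conditional_joint_limit_computation
    (L : ℝ → ℝ) (hLmeas : Measurable L) (hLpos : ∀ x : ℝ, 0 < x → 0 < L x)
    (hLslow : ∀ c : ℝ, 0 < c → Tendsto (fun x : ℝ => L (c * x) / L x) atTop (nhds 1))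
    (Fbar : ℝ → ℝ) (hFmono : AntitoneOn Fbar (Set.Ioi 0))
    (hFrange : ∀ x : ℝ, 0 < x → Fbar x ∈ Set.Icc (0:ℝ) 1)
    (α C_X α' ρ : ℝ) (hα : 0 < α) (hC : 0 < C_X)
    (hFtail : Tendsto (fun x : ℝ => x ^ α * Fbar x) atTop (nhds C_X))
    (hα' : 0 < α') (hρ : ρ < 1)
    (β : ℝ) (hβdef : β = α / α' + ρ - 1) (hβ : β ∈ Set.Ioo (0:ℝ) 1)
    (m : ℕ → ℕ) (hmmono : StrictMono m) (hm1 : ∀ n, 1 ≤ m n)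
    (hmgrow : Tendsto (fun n : ℕ => (m n : ℝ) * L n / (n : ℝ) ^ (1 - ρ)) atTop atTop)
    (a : ℕ → ℝ)
    (ha : ∀ n : ℕ, a n
      = (C_X * (Real.Gamma (1 - β) / β) * (n : ℝ) ^ β * (m n : ℝ) * L n) ^ (1 / α))
    (k : ℕ) (hk : 1 ≤ k) (c₁ c₂ : ℝ) (hc₁ : 0 < c₁) (hc₁₂ : c₁ < c₂)
    (x : ℝ) (hx : 0 < x) :
    Tendsto
      (fun n : ℕ => (m n : ℝ) *
        ∫ q in Set.Ioc (c₁ / (n : ℝ)) (c₂ / (n : ℝ)),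
          (n.choose k : ℝ) * q ^ k * (1 - q) ^ (n - k) *
            Fbar (a n * q ^ (1 / α') * x) * q ^ (-ρ) * L (1 / q))
      atTop
      (nhds (x ^ (-α) * (β / Real.Gamma (1 - β)) *
        ∫ u in Set.Ioc c₁ c₂, Real.exp (-u) * u ^ ((k : ℝ) - 1 - β) / (Nat.factorial k : ℝ))) := by

  obtain ⟨hβ0, hβ1⟩ := hβ
  have hΓ : 0 < Real.Gamma (1 - β) := Real.Gamma_pos_of_pos (by linarith)
  have hc₂ : 0 < c₂ := lt_trans hc₁ hc₁₂
  set fInt : ℕ → ℝ → ℝ := fun n q =>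
    (n.choose k : ℝ) * q ^ k * (1 - q) ^ (n - k) *
      Fbar (a n * q ^ (1 / α') * x) * q ^ (-ρ) * L (1 / q) with hfInt
  set F : ℕ → ℝ → ℝ := fun n u => ((m n : ℝ) / (n : ℝ)) * fInt n (u / (n : ℝ)) with hFdef
  set g : ℝ → ℝ := fun u => x ^ (-α) * (β / Real.Gamma (1 - β)) *
    (Real.exp (-u) * u ^ ((k : ℝ) - 1 - β) / (Nat.factorial k : ℝ)) with hgdef
  have hmn : ∀ n : ℕ, (0:ℝ) < m n := fun n => by exact_mod_cast hm1 n
  have hLn : ∀ n : ℕ, 1 ≤ n → 0 < L n := fun n hn => hLpos _ (by exact_mod_cast hn)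
  have han0 : ∀ n : ℕ, 1 ≤ n → 0 < a n := fun n hn => by
    have h1 : (0:ℝ) < n := Nat.cast_pos.mpr hn
    have h2 := hLn n hn
    have h3 := hmn n
    rw [ha n]; positivity
  have halg : ∀ n : ℕ, 1 ≤ n → ∀ u : ℝ, 0 < u → F n u
      = ((n.choose k : ℝ)/(n:ℝ)^k) * u^k * (1 - u/(n:ℝ))^(n-k) *
        (Fbar (a n * (u/(n:ℝ)) ^ (1/α') * x) * (a n * (u/(n:ℝ)) ^ (1/α') * x) ^ α) *
        (x ^ (-α) * u ^ (-(1+β)) * (β/(C_X * Real.Gamma (1-β)))) *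
        (L ((1/u) * (n:ℝ)) / L (n:ℝ)) := fun n hn u hu =>
    alg L Fbar hα hα' hC hβ0 hΓ hβdef hx hu (Nat.cast_pos.mpr hn) (hLn n hn) (hmn n) (ha n)
  have httα : ∀ u : ℝ, 0 < u →
      Tendsto (fun n : ℕ => a n * (u/(n:ℝ)) ^ (1/α') * x) atTop atTop := by
    intro u hu
    have hκ : (0:ℝ) < C_X * (Real.Gamma (1-β)/β) * u^(α/α') * x^α := by positivity
    have h1 : Tendsto (fun n : ℕ => (C_X * (Real.Gamma (1-β)/β) * u^(α/α') * x^α) *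
        ((m n : ℝ) * L n / (n:ℝ)^(1-ρ))) atTop atTop := hmgrow.const_mul_atTop hκ
    have h2 : Tendsto (fun n : ℕ => (a n * (u/(n:ℝ)) ^ (1/α') * x) ^ α) atTop atTop := by
      refine h1.congr' ?_
      filter_upwards [eventually_ge_atTop 1] with n hn
      exact (talg L hα hα' hC hβ0 hΓ hβdef hx hu (Nat.cast_pos.mpr hn) (hLn n hn)
        (hmn n) (ha n)).symm
    have h3 := (tendsto_rpow_atTop (by positivity : (0:ℝ) < 1/α)).comp h2
    refine h3.congr' ?_
    filter_upwards [eventually_ge_atTop 1] with n hn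
    have hn0 : (0:ℝ) < n := Nat.cast_pos.mpr hn
    have h2' := han0 n hn
    have htpos : 0 < a n * (u/(n:ℝ)) ^ (1/α') * x := by positivity
    simp only [Function.comp_apply]
    rw [show (1:ℝ)/α = α⁻¹ from one_div α, Real.rpow_rpow_inv htpos.le hα.ne']
  obtain ⟨T, hT⟩ := eventually_atTop.mp (hFtail.eventually (eventually_le_nhds (lt_add_one C_X)))
  have hmono : ∀ n : ℕ, 1 ≤ n → ∀ u : ℝ, c₁ ≤ u →
      a n * (c₁/(n:ℝ)) ^ (1/α') * x ≤ a n * (u/(n:ℝ)) ^ (1/α') * x := by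
    intro n hn u hcu
    have hn0 : (0:ℝ) < n := Nat.cast_pos.mpr hn
    have h2 := han0 n hn
    gcongr a n * ?_ * x
    exact Real.rpow_le_rpow (by positivity) (by gcongr) (by positivity)
  have hUCT := uct L hLmeas hLpos hLslow (A := 1/c₂) (B := 1/c₁)
    (by positivity) (one_div_le_one_div_of_le hc₁ hc₁₂.le) (ε := 1) one_pos
  have hUCTn : ∀ᶠ n : ℕ in atTop, ∀ c ∈ Set.Icc (1/c₂) (1/c₁),
      |L (c * (n:ℝ)) / L (n:ℝ) - 1| ≤ 1 := tendsto_natCast_atTop_atTop.eventually hUCT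
  set K : ℝ := 1 * c₂^k * 1 * (C_X+1) *
    (x ^ (-α) * c₁ ^ (-(1+β)) * (β/(C_X * Real.Gamma (1-β)))) * 2 with hKdef
  have hmeas : ∀ᶠ n : ℕ in atTop,
      AEStronglyMeasurable (F n) (volume.restrict (Set.Ioc c₁ c₂)) := by
    filter_upwards [eventually_ge_atTop 1] with n hn
    have hn0 : (0:ℝ) < n := Nat.cast_pos.mpr hn
    have h2 := han0 n hn
    have hanti : AntitoneOn (fun u : ℝ => Fbar (a n * (u/(n:ℝ)) ^ (1/α') * x))
        (Set.Ioc c₁ c₂) := by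
      intro u₁ hu₁ u₂ hu₂ h12
      have p1 : 0 < u₁ := lt_trans hc₁ hu₁.1
      have p2 : 0 < u₂ := lt_trans hc₁ hu₂.1
      refine hFmono (Set.mem_Ioi.mpr (by positivity)) (Set.mem_Ioi.mpr (by positivity)) ?_
      gcongr a n * ?_ * x
      exact Real.rpow_le_rpow (by positivity) (by gcongr) (by positivity)
    have hFb : AEMeasurable (fun u : ℝ => Fbar (a n * (u/(n:ℝ)) ^ (1/α') * x))
        (volume.restrict (Set.Ioc c₁ c₂)) :=
      aemeasurable_restrict_of_antitoneOn measurableSet_Ioc hanti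
    have mA : Measurable fun u : ℝ =>
        (n.choose k : ℝ) * (u/(n:ℝ))^k * (1 - u/(n:ℝ))^(n-k) := by fun_prop
    have mB : Measurable fun u : ℝ => (u/(n:ℝ)) ^ (-ρ) := by fun_prop
    have mC : Measurable fun u : ℝ => L (1 / (u/(n:ℝ))) := by fun_prop
    exact ((((mA.aemeasurable.mul hFb).mul mB.aemeasurable).mul
      mC.aemeasurable).const_mul _).aestronglyMeasurable
  have hbound : ∀ᶠ n : ℕ in atTop,
      ∀ᵐ u ∂(volume.restrict (Set.Ioc c₁ c₂)), ‖F n u‖ ≤ K := by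
    filter_upwards [eventually_ge_atTop 1,
      tendsto_natCast_atTop_atTop.eventually_ge_atTop c₂,
      (httα c₁ hc₁).eventually_ge_atTop T, hUCTn] with n hn hnc hnT hnL
    rw [ae_restrict_iff' measurableSet_Ioc]
    refine ae_of_all _ fun u hu => ?_
    obtain ⟨hu1, hu2⟩ := hu
    have hu0 : 0 < u := lt_trans hc₁ hu1
    have hn0 : (0:ℝ) < n := Nat.cast_pos.mpr hn
    have h2 := han0 n hn
    have hLn' := hLn n hn
    have hLu : 0 < L ((1/u) * (n:ℝ)) := hLpos _ (by positivity)
    rw [halg n hn u hu0]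
    set t : ℝ := a n * (u/(n:ℝ)) ^ (1/α') * x with htdef
    have htpos : 0 < t := by rw [htdef]; positivity
    have hFb0 : 0 ≤ Fbar t := (hFrange _ htpos).1
    have hw0 : (0:ℝ) ≤ 1 - u/(n:ℝ) := by
      rw [sub_nonneg]
      exact (div_le_one hn0).mpr (le_trans hu2 hnc)
    have q1 : (0:ℝ) ≤ (n.choose k : ℝ)/(n:ℝ)^k := by positivity
    have q2 : (0:ℝ) ≤ u^k := by positivity
    have q3 : (0:ℝ) ≤ (1 - u/(n:ℝ))^(n-k) := pow_nonneg hw0 _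
    have q4 : 0 ≤ Fbar t * t^α := mul_nonneg hFb0 (Real.rpow_nonneg htpos.le _)
    have q5 : (0:ℝ) ≤ x^(-α) * u^(-(1+β)) * (β/(C_X * Real.Gamma (1-β))) := by positivity
    have q6 : 0 ≤ L ((1/u) * (n:ℝ)) / L (n:ℝ) := div_nonneg hLu.le hLn'.le
    rw [Real.norm_eq_abs, abs_of_nonneg (mul_nonneg (mul_nonneg (mul_nonneg
      (mul_nonneg (mul_nonneg q1 q2) q3) q4) q5) q6)]
    have b1 : (n.choose k : ℝ)/(n:ℝ)^k ≤ 1 := by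
      rw [div_le_one (by positivity)]
      exact_mod_cast Nat.choose_le_pow n k
    have b2 : u^k ≤ c₂^k := pow_le_pow_left₀ hu0.le hu2 k
    have b3 : (1 - u/(n:ℝ))^(n-k) ≤ 1 :=
      pow_le_one₀ hw0 (by linarith [div_nonneg hu0.le hn0.le])
    have b4 : Fbar t * t^α ≤ C_X + 1 := by
      rw [mul_comm]
      exact hT t (le_trans hnT (hmono n hn u hu1.le))
    have b5 : x^(-α) * u^(-(1+β)) * (β/(C_X * Real.Gamma (1-β)))
        ≤ x^(-α) * c₁^(-(1+β)) * (β/(C_X * Real.Gamma (1-β))) := by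
      have h5 := Real.rpow_le_rpow_of_nonpos hc₁ hu1.le (by linarith : -(1+β) ≤ 0)
      gcongr
    have b6 : L ((1/u) * (n:ℝ)) / L (n:ℝ) ≤ 2 := by
      have hmem : (1/u) ∈ Set.Icc (1/c₂) (1/c₁) :=
        ⟨one_div_le_one_div_of_le hu0 hu2, one_div_le_one_div_of_le hc₁ hu1.le⟩
      have habs := (abs_le.mp (hnL (1/u) hmem)).2
      linarith
    have P2 : (n.choose k : ℝ)/(n:ℝ)^k * u^k ≤ 1 * c₂^k :=
      mul_le_mul b1 b2 q2 (by norm_num)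
    have P3 : (n.choose k : ℝ)/(n:ℝ)^k * u^k * (1 - u/(n:ℝ))^(n-k) ≤ 1 * c₂^k * 1 :=
      mul_le_mul P2 b3 q3 (by positivity)
    have P4 := mul_le_mul P3 b4 q4 (by positivity)
    have P5 := mul_le_mul P4 b5 q5 (by positivity)
    have P6 := mul_le_mul P5 b6 q6 (by positivity)
    rw [hKdef]
    exact P6
  have hint : Integrable (fun _ : ℝ => K) (volume.restrict (Set.Ioc c₁ c₂)) :=
    MeasureTheory.integrableOn_const measure_Ioc_lt_top.ne enorm_ne_top
  have hlim : ∀ᵐ u ∂(volume.restrict (Set.Ioc c₁ c₂)),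
      Tendsto (fun n : ℕ => F n u) atTop (nhds (g u)) := by
    rw [ae_restrict_iff' measurableSet_Ioc]
    refine ae_of_all _ fun u hu => ?_
    obtain ⟨hu1, hu2⟩ := hu
    have hu0 : 0 < u := lt_trans hc₁ hu1
    have hA := (choose_lim k).mul_const (u^k)
    have hB := pow_exp_lim u hu0 k
    have hC' : Tendsto (fun n : ℕ => Fbar (a n * (u/(n:ℝ)) ^ (1/α') * x) *
        (a n * (u/(n:ℝ)) ^ (1/α') * x) ^ α) atTop (nhds C_X) := by
      have h := hFtail.comp (httα u hu0)
      refine h.congr fun n => ?_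
      simp only [Function.comp_apply]
      ring
    have hE : Tendsto (fun n : ℕ => L ((1/u) * (n:ℝ)) / L (n:ℝ)) atTop (nhds 1) :=
      (hLslow (1/u) (by positivity)).comp tendsto_natCast_atTop_atTop
    have total := (((hA.mul hB).mul hC').mul_const
      (x ^ (-α) * u ^ (-(1+β)) * (β/(C_X * Real.Gamma (1-β))))).mul hE
    have hval : 1 / (Nat.factorial k : ℝ) * u ^ k * Real.exp (-u) * C_X *
        (x ^ (-α) * u ^ (-(1+β)) * (β/(C_X * Real.Gamma (1-β)))) * 1 = g u := by
      have huk : (u:ℝ)^k * u^(-(1+β)) = u^((k:ℝ)-1-β) := by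
        rw [← Real.rpow_natCast u k, ← Real.rpow_add hu0]
        congr 1; ring
      simp only [hgdef]
      rw [← huk]
      field_simp
    rw [← hval]
    refine Tendsto.congr' ?_ total
    filter_upwards [eventually_ge_atTop 1] with n hn
    exact (halg n hn u hu0).symm
  have hDCT := MeasureTheory.tendsto_integral_filter_of_dominated_convergence
    (μ := volume.restrict (Set.Ioc c₁ c₂)) (fun _ => K) hmeas hbound hint hlim
  have hgval : (∫ u in Set.Ioc c₁ c₂, g u) = x ^ (-α) * (β / Real.Gamma (1 - β)) *
      ∫ u in Set.Ioc c₁ c₂, Real.exp (-u) * u ^ ((k : ℝ) - 1 - β) / (Nat.factorial k : ℝ) := by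
    simp only [hgdef]
    exact MeasureTheory.integral_const_mul _ _
  rw [← hgval]
  refine Tendsto.congr' ?_ hDCT
  filter_upwards [eventually_ge_atTop 1] with n hn
  have hn0 : (0:ℝ) < n := Nat.cast_pos.mpr hn
  show (∫ u in Set.Ioc c₁ c₂, F n u)
    = (m n : ℝ) * ∫ q in Set.Ioc (c₁/(n:ℝ)) (c₂/(n:ℝ)), fInt n q
  have hle : c₁/(n:ℝ) ≤ c₂/(n:ℝ) := by gcongr
  have e0 : (∫ u in Set.Ioc c₁ c₂, F n u)
      = ((m n : ℝ)/(n:ℝ)) * ∫ u in Set.Ioc c₁ c₂, fInt n (u/(n:ℝ)) := by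
    simp only [hFdef]
    exact MeasureTheory.integral_const_mul _ _
  have e1 : (∫ u in Set.Ioc c₁ c₂, fInt n (u/(n:ℝ)))
      = ∫ u in c₁..c₂, fInt n (u/(n:ℝ)) := (intervalIntegral.integral_of_le hc₁₂.le).symm
  have e2 : (∫ u in c₁..c₂, fInt n (u/(n:ℝ)))
      = (n:ℝ) • ∫ q in (c₁/(n:ℝ))..(c₂/(n:ℝ)), fInt n q :=
    intervalIntegral.integral_comp_div (fInt n) hn0.ne'
  have e3 : (∫ q in (c₁/(n:ℝ))..(c₂/(n:ℝ)), fInt n q)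
      = ∫ q in Set.Ioc (c₁/(n:ℝ)) (c₂/(n:ℝ)), fInt n q := intervalIntegral.integral_of_le hle
  rw [e0, e1, e2, e3, smul_eq_mul, ← mul_assoc, div_mul_cancel₀ _ hn0.ne']
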